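/- Let H_A, H_B, H_I be Hermitian operators on a finite-dimensional tensor-product Hilbert space H_A⊗H_B, with H_A, H_B acting on their respective factors and [H_I, H_A + H_B] = 0, and let H = H_A + H_B + H_I. Let β_A ≥ β_B be real numbers and take the initial state to be the product of Gibbs states ρ = (e^{−β_A H_A}/tr e^{−β_A H_A}) ⊗ (e^{−β_B H_B}/tr e^{−β_B H_B}). Then for every t, the heat transfer Q = tr[(e^{−iHt} ρ e^{iHt} − ρ)H_B] satisfies (β_B − β_A)·Q ≥ 0; i.e., the Clausius statement holds: heat does not flow from the colder system A into the hotter system B. -/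

import Mathlib

open Matrix Kronecker Complex
open scoped ComplexOrder

noncomputable section

/-- Matrix logarithm of a Hermitian matrix via its spectral decomposition, with the
convention `log 0 = 0` on the spectrum (junk value `0` on non-Hermitian matrices). -/
def mlog {n : Type*} [Fintype n] [DecidableEq n] (A : Matrix n n ℂ) : Matrix n n ℂ :=
  if h : A.IsHermitian then
    (h.eigenvectorUnitary : Matrix n n ℂ) *
      Matrix.diagonal (fun i => (Real.log (h.eigenvalues i) : ℂ)) *
      (h.eigenvectorUnitary : Matrix n n ℂ)ᴴ
  else 0

/-- Von Neumann entropy `S(ρ) = -tr(ρ log ρ)` (with the convention `0 log 0 = 0`). -/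
def vN {n : Type*} [Fintype n] [DecidableEq n] (ρ : Matrix n n ℂ) : ℂ :=
  -(ρ * mlog ρ).trace

/-- Quantum relative entropy `S(ρ‖σ) = tr(ρ log ρ) - tr(ρ log σ)`. -/
def relEnt {n : Type*} [Fintype n] [DecidableEq n] (ρ σ : Matrix n n ℂ) : ℂ :=
  (ρ * mlog ρ).trace - (ρ * mlog σ).trace

/-- The Gibbs state `e^{-βH}/tr(e^{-βH})` of a Hamiltonian `H` at inverse temperature `β`. -/
def gibbs {n : Type*} [Fintype n] [DecidableEq n] (β : ℝ) (H : Matrix n n ℂ) :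
    Matrix n n ℂ :=
  (NormedSpace.exp ((-β : ℂ) • H)).trace⁻¹ • NormedSpace.exp ((-β : ℂ) • H)

/-- Unitary (Schrödinger) evolution `ρ(t) = e^{-iHt} ρ e^{iHt}` (with `ħ = 1`). -/
def evolve {n : Type*} [Fintype n] [DecidableEq n] (H ρ : Matrix n n ℂ) (t : ℝ) :
    Matrix n n ℂ :=
  NormedSpace.exp ((-(I * t)) • H) * ρ * NormedSpace.exp ((I * t) • H)

/-- Reduced density matrix on the first factor (partial trace over the second). -/
def redA {m n : Type*} [Fintype m] [Fintype n]
    (ρ : Matrix (m × n) (m × n) ℂ) : Matrix m m ℂ :=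
  Matrix.of fun i j => ∑ k, ρ (i, k) (j, k)

/-- Reduced density matrix on the second factor (partial trace over the first). -/
def redB {m n : Type*} [Fintype m] [Fintype n]
    (ρ : Matrix (m × n) (m × n) ℂ) : Matrix n n ℂ :=
  Matrix.of fun i j => ∑ k, ρ (k, i) (k, j)

/-- Bipartite mutual information `I_{A:B}(ϱ) = S(ϱ_A) + S(ϱ_B) - S(ϱ)`. -/
def mutInfo {m n : Type*} [Fintype m] [DecidableEq m] [Fintype n] [DecidableEq n]
    (ρ : Matrix (m × n) (m × n) ℂ) : ℂ :=
  vN (redA ρ) + vN (redB ρ) - vN ρ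

namespace ClausiusAux

variable {n : Type*} [Fintype n] [DecidableEq n]

lemma aeval_diagonal (d : n → ℂ) (p : Polynomial ℂ) :
    (Polynomial.aeval (Matrix.diagonal d)) p = Matrix.diagonal fun i => p.eval (d i) := by
  induction p using Polynomial.induction_on' with
  | add f g hf hg => simp [hf, hg, Matrix.diagonal_add]
  | monomial k a =>
      simp only [Polynomial.aeval_monomial, Polynomial.eval_monomial,
        Matrix.algebraMap_eq_diagonal, Matrix.diagonal_pow, Matrix.diagonal_mul_diagonal]
      rfl

lemma uconj_pow {U A : Matrix n n ℂ} (hU : U ∈ Matrix.unitaryGroup n ℂ) (k : ℕ) :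
    (U * A * Uᴴ) ^ k = U * A ^ k * Uᴴ := by
  have h1 : Uᴴ * U = 1 := by
    simpa [Matrix.star_eq_conjTranspose] using (Matrix.mem_unitaryGroup_iff'.mp hU)
  induction k with
  | zero => simp [pow_zero, ← Matrix.star_eq_conjTranspose,
      Matrix.mem_unitaryGroup_iff.mp hU]
  | succ k ih =>
      rw [pow_succ, pow_succ, ih]
      calc U * A ^ k * Uᴴ * (U * A * Uᴴ) = U * A ^ k * (Uᴴ * U) * A * Uᴴ := by
            noncomm_ring
        _ = U * (A ^ k * A) * Uᴴ := by rw [h1]; noncomm_ring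

lemma aeval_unitary_conj {U : Matrix n n ℂ} (hU : U ∈ Matrix.unitaryGroup n ℂ)
    (A : Matrix n n ℂ) (p : Polynomial ℂ) :
    Polynomial.aeval (U * A * Uᴴ) p = U * Polynomial.aeval A p * Uᴴ := by
  induction p using Polynomial.induction_on' with
  | add f g hf hg => rw [map_add, map_add, hf, hg]; noncomm_ring
  | monomial k a =>
      rw [Polynomial.aeval_monomial, Polynomial.aeval_monomial, uconj_pow hU]
      simp only [Algebra.algebraMap_eq_smul_one, smul_mul_assoc, one_mul, mul_smul_comm]

/-- Well-definedness of applying a real function through any unitary diagonalization. -/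
lemma spec_fun_eq {U V : Matrix n n ℂ} (hU : U ∈ Matrix.unitaryGroup n ℂ)
    (hV : V ∈ Matrix.unitaryGroup n ℂ) (d e : n → ℝ) (f : ℝ → ℝ)
    (h : U * Matrix.diagonal (fun i => (d i : ℂ)) * Uᴴ
        = V * Matrix.diagonal (fun i => (e i : ℂ)) * Vᴴ) :
    U * Matrix.diagonal (fun i => (f (d i) : ℂ)) * Uᴴ
      = V * Matrix.diagonal (fun i => (f (e i) : ℂ)) * Vᴴ := by
  classical
  set s : Finset ℝ := Finset.univ.image d ∪ Finset.univ.image e with hs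
  have hinj : Set.InjOn (fun r : ℝ => (r : ℂ)) s := fun a _ b _ hab =>
    Complex.ofReal_injective (by simpa using hab)
  set p : Polynomial ℂ := Lagrange.interpolate s (fun r : ℝ => (r : ℂ))
      (fun r : ℝ => (f r : ℂ)) with hp
  have hev : ∀ r : ℝ, r ∈ s → p.eval (r : ℂ) = (f r : ℂ) := fun r hr =>
    Lagrange.eval_interpolate_at_node _ hinj hr
  have hd : ∀ i, p.eval ((d i : ℝ) : ℂ) = (f (d i) : ℂ) := fun i =>
    hev _ (Finset.mem_union_left _ (Finset.mem_image_of_mem d (Finset.mem_univ i)))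
  have he : ∀ i, p.eval ((e i : ℝ) : ℂ) = (f (e i) : ℂ) := fun i =>
    hev _ (Finset.mem_union_right _ (Finset.mem_image_of_mem e (Finset.mem_univ i)))
  calc U * Matrix.diagonal (fun i => (f (d i) : ℂ)) * Uᴴ
      = U * Matrix.diagonal (fun i => p.eval (d i : ℂ)) * Uᴴ := by
        simp_rw [hd]
    _ = Polynomial.aeval (U * Matrix.diagonal (fun i => (d i : ℂ)) * Uᴴ) p := by
        rw [aeval_unitary_conj hU, aeval_diagonal]
    _ = Polynomial.aeval (V * Matrix.diagonal (fun i => (e i : ℂ)) * Vᴴ) p := by rw [h]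
    _ = V * Matrix.diagonal (fun i => (f (e i) : ℂ)) * Vᴴ := by
        rw [aeval_unitary_conj hV, aeval_diagonal]
        simp_rw [he]

lemma isHermitian_uconj_diag (U : Matrix n n ℂ) (d : n → ℝ) :
    (U * Matrix.diagonal (fun i => (d i : ℂ)) * Uᴴ).IsHermitian := by
  have hD : (Matrix.diagonal (fun i => (d i : ℂ)))ᴴ = Matrix.diagonal (fun i => (d i : ℂ)) := by
    ext i j
    simp only [Matrix.conjTranspose_apply]
    by_cases hij : i = j
    · subst hij; simp [Complex.conj_ofReal]
    · rw [Matrix.diagonal_apply_ne _ (fun h => hij h.symm),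
        Matrix.diagonal_apply_ne _ hij, star_zero]
  unfold Matrix.IsHermitian
  simp only [Matrix.conjTranspose_mul, Matrix.conjTranspose_conjTranspose, hD, mul_assoc]

lemma mlog_uconj {U : Matrix n n ℂ} (hU : U ∈ Matrix.unitaryGroup n ℂ) (d : n → ℝ) :
    mlog (U * Matrix.diagonal (fun i => (d i : ℂ)) * Uᴴ)
      = U * Matrix.diagonal (fun i => (Real.log (d i) : ℂ)) * Uᴴ := by
  have hA := isHermitian_uconj_diag U d
  rw [mlog, dif_pos hA]
  have hmem : (hA.eigenvectorUnitary : Matrix n n ℂ) ∈ Matrix.unitaryGroup n ℂ :=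
    SetLike.coe_mem _
  have hst : (star (hA.eigenvectorUnitary : Matrix n n ℂ))
      = (hA.eigenvectorUnitary : Matrix n n ℂ)ᴴ := rfl
  have h0 : U * Matrix.diagonal (fun i => (d i : ℂ)) * Uᴴ
      = (hA.eigenvectorUnitary : Matrix n n ℂ) *
        Matrix.diagonal (fun i => ((hA.eigenvalues i : ℝ) : ℂ)) *
        (hA.eigenvectorUnitary : Matrix n n ℂ)ᴴ := by
    rw [← hst]; exact hA.spectral_theorem
  exact (spec_fun_eq hU hmem d hA.eigenvalues Real.log h0).symm

lemma klein_real {p q : n → ℝ} {c : n → n → ℝ}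
    (hp : ∀ i, 0 ≤ p i) (hq : ∀ j, 0 < q j) (hc : ∀ i j, 0 ≤ c i j)
    (hrow : ∀ i, ∑ j, c i j = 1) (hcol : ∀ j, ∑ i, c i j = 1)
    (hps : ∑ i, p i = 1) (hqs : ∑ j, q j = 1) :
    ∑ i, ∑ j, c i j * (p i * Real.log (q j)) ≤ ∑ i, p i * Real.log (p i) := by
  have key : ∀ i j, c i j * (p i - q j)
      ≤ c i j * (p i * Real.log (p i) - p i * Real.log (q j)) := by
    intro i j
    apply mul_le_mul_of_nonneg_left _ (hc i j)
    rcases eq_or_lt_of_le (hp i) with h0 | h0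
    · rw [← h0]; simpa using le_of_lt (hq j)
    · have hlog : Real.log (q j / p i) ≤ q j / p i - 1 :=
        Real.log_le_sub_one_of_pos (div_pos (hq j) h0)
      rw [Real.log_div (ne_of_gt (hq j)) (ne_of_gt h0)] at hlog
      have h2 := mul_le_mul_of_nonneg_left hlog (le_of_lt h0)
      rw [mul_sub, mul_sub, mul_div_cancel₀ _ (ne_of_gt h0), mul_one] at h2
      linarith
  have hsum0 : ∑ i, ∑ j, c i j * (p i - q j) = 0 := by
    have h1 : ∑ i, ∑ j, c i j * p i = 1 := by
      calc ∑ i, ∑ j, c i j * p i = ∑ i, (∑ j, c i j) * p i := by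
            simp_rw [Finset.sum_mul]
        _ = 1 := by simp_rw [hrow, one_mul]; exact hps
    have h2 : ∑ i, ∑ j, c i j * q j = 1 := by
      rw [Finset.sum_comm]
      calc ∑ j, ∑ i, c i j * q j = ∑ j, (∑ i, c i j) * q j := by
            simp_rw [Finset.sum_mul]
        _ = 1 := by simp_rw [hcol, one_mul]; exact hqs
    simp_rw [mul_sub, Finset.sum_sub_distrib]
    rw [h1, h2, sub_self]
  have hD : 0 ≤ ∑ i, ∑ j, c i j * (p i * Real.log (p i) - p i * Real.log (q j)) := by
    rw [← hsum0]
    exact Finset.sum_le_sum fun i _ => Finset.sum_le_sum fun j _ => key i j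
  have hB : ∑ i, p i * Real.log (p i)
      = ∑ i, ∑ j, c i j * (p i * Real.log (p i)) := by
    refine Finset.sum_congr rfl fun i _ => ?_
    rw [← Finset.sum_mul, hrow i, one_mul]
  have hsplit : ∑ i, ∑ j, c i j * (p i * Real.log (p i))
      = ∑ i, ∑ j, c i j * (p i * Real.log (q j))
        + ∑ i, ∑ j, c i j * (p i * Real.log (p i) - p i * Real.log (q j)) := by
    rw [← Finset.sum_add_distrib]
    refine Finset.sum_congr rfl fun i _ => ?_
    rw [← Finset.sum_add_distrib]
    refine Finset.sum_congr rfl fun j _ => ?_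
    ring
  rw [hB, hsplit]
  linarith

lemma trace_uconj {U : Matrix n n ℂ} (hU : U ∈ Matrix.unitaryGroup n ℂ)
    (A : Matrix n n ℂ) : (U * A * Uᴴ).trace = A.trace := by
  have h1 : Uᴴ * U = 1 := by
    simpa [Matrix.star_eq_conjTranspose] using Matrix.mem_unitaryGroup_iff'.mp hU
  rw [Matrix.trace_mul_cycle, h1, one_mul]

lemma trace_cross (U V : Matrix n n ℂ) (p q : n → ℝ) :
    ((U * Matrix.diagonal (fun i => (p i : ℂ)) * Uᴴ) *
      (V * Matrix.diagonal (fun j => (q j : ℂ)) * Vᴴ)).trace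
    = ((∑ i, ∑ j, Complex.normSq ((Vᴴ * U) j i) * (p i * q j) : ℝ) : ℂ) := by
  set P : Matrix n n ℂ := Matrix.diagonal (fun i => (p i : ℂ)) with hP
  set Q : Matrix n n ℂ := Matrix.diagonal (fun j => (q j : ℂ)) with hQ
  set T : Matrix n n ℂ := Vᴴ * U with hT
  have hUV : Uᴴ * V = Tᴴ := by
    rw [hT, Matrix.conjTranspose_mul, Matrix.conjTranspose_conjTranspose]
  have step1 : ((U * P * Uᴴ) * (V * Q * Vᴴ)).trace = (P * (Tᴴ * (Q * T))).trace := by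
    have e1 : (U * P * Uᴴ) * (V * Q * Vᴴ) = U * (P * (Uᴴ * V) * Q * Vᴴ) := by
      noncomm_ring
    rw [e1, Matrix.trace_mul_comm]
    congr 1
    rw [hUV]
    noncomm_ring
  rw [step1]
  have step2 : (P * (Tᴴ * (Q * T))).trace = ∑ i, (p i : ℂ) * (Tᴴ * (Q * T)) i i := by
    simp [Matrix.trace, Matrix.diag, hP, Matrix.diagonal_mul]
  have step3 : ∀ i, (Tᴴ * (Q * T)) i i
      = ∑ j, ((Complex.normSq (T j i) : ℝ) : ℂ) * (q j : ℂ) := by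
    intro i
    rw [Matrix.mul_apply]
    refine Finset.sum_congr rfl fun j _ => ?_
    rw [Matrix.conjTranspose_apply, hQ, Matrix.diagonal_mul]
    rw [show star (T j i) * ((q j : ℂ) * T j i) = (T j i * star (T j i)) * (q j : ℂ) by ring]
    rw [Complex.star_def, Complex.mul_conj]
  rw [step2]
  rw [Finset.sum_congr rfl fun i _ => by rw [step3 i]]
  rw [Finset.sum_congr rfl fun i _ => Finset.mul_sum _ _ _]
  push_cast
  refine Finset.sum_congr rfl fun i _ => Finset.sum_congr rfl fun j _ => ?_
  ring

lemma trace_mlog_self {V : Matrix n n ℂ} (hV : V ∈ Matrix.unitaryGroup n ℂ) (d : n → ℝ) :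
    ((V * Matrix.diagonal (fun i => (d i : ℂ)) * Vᴴ) *
      mlog (V * Matrix.diagonal (fun i => (d i : ℂ)) * Vᴴ)).trace
      = ((∑ i, d i * Real.log (d i) : ℝ) : ℂ) := by
  have hVV : Vᴴ * V = 1 := by
    simpa [Matrix.star_eq_conjTranspose] using Matrix.mem_unitaryGroup_iff'.mp hV
  rw [mlog_uconj hV]
  have e1 : (V * Matrix.diagonal (fun i => (d i : ℂ)) * Vᴴ) *
      (V * Matrix.diagonal (fun i => (Real.log (d i) : ℂ)) * Vᴴ)
      = V * (Matrix.diagonal (fun i => (d i : ℂ)) * (Vᴴ * V) *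
          Matrix.diagonal (fun i => (Real.log (d i) : ℂ))) * Vᴴ := by
    noncomm_ring
  rw [e1, hVV, mul_one, trace_uconj hV, Matrix.diagonal_mul_diagonal, Matrix.trace_diagonal]
  push_cast
  rfl

lemma normSq_col_sum {T : Matrix n n ℂ} (hT : T ∈ Matrix.unitaryGroup n ℂ) (i : n) :
    ∑ j, Complex.normSq (T j i) = 1 := by
  have h2 : Tᴴ * T = 1 := by
    simpa [Matrix.star_eq_conjTranspose] using Matrix.mem_unitaryGroup_iff'.mp hT
  have h3 : (Tᴴ * T) i i = 1 := by rw [h2]; simp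
  rw [Matrix.mul_apply] at h3
  have h4 : ∑ j, ((Complex.normSq (T j i) : ℝ) : ℂ) = 1 := by
    rw [← h3]
    refine Finset.sum_congr rfl fun j _ => ?_
    rw [Matrix.conjTranspose_apply, Complex.star_def, mul_comm, Complex.mul_conj]
  exact_mod_cast h4

lemma normSq_row_sum {T : Matrix n n ℂ} (hT : T ∈ Matrix.unitaryGroup n ℂ) (j : n) :
    ∑ i, Complex.normSq (T j i) = 1 := by
  have h2 : T * Tᴴ = 1 := by
    simpa [Matrix.star_eq_conjTranspose] using Matrix.mem_unitaryGroup_iff.mp hT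
  have h3 : (T * Tᴴ) j j = 1 := by rw [h2]; simp
  rw [Matrix.mul_apply] at h3
  have h4 : ∑ i, ((Complex.normSq (T j i) : ℝ) : ℂ) = 1 := by
    rw [← h3]
    refine Finset.sum_congr rfl fun i _ => ?_
    rw [Matrix.conjTranspose_apply, Complex.star_def, Complex.mul_conj]
  exact_mod_cast h4

lemma exp_uconj {U : Matrix n n ℂ} (hU : U ∈ Matrix.unitaryGroup n ℂ) (A : Matrix n n ℂ) :
    NormedSpace.exp (U * A * Uᴴ) = U * NormedSpace.exp A * Uᴴ := by
  have h1 : U * Uᴴ = 1 := by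
    simpa [Matrix.star_eq_conjTranspose] using Matrix.mem_unitaryGroup_iff.mp hU
  have h2 : Uᴴ * U = 1 := by
    simpa [Matrix.star_eq_conjTranspose] using Matrix.mem_unitaryGroup_iff'.mp hU
  let Uu : (Matrix n n ℂ)ˣ := ⟨U, Uᴴ, h1, h2⟩
  have := Matrix.exp_units_conj Uu A
  simpa [Uu] using this

end ClausiusAux

section KronAux

variable {m n : Type*} [Fintype m] [DecidableEq m] [Fintype n] [DecidableEq n]

/-- `A ↦ A ⊗ₖ 1` as an algebra homomorphism. -/
def kronL (m n : Type*) [Fintype m] [DecidableEq m] [Fintype n] [DecidableEq n] :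
    Matrix m m ℂ →ₐ[ℂ] Matrix (m × n) (m × n) ℂ where
  toFun A := A ⊗ₖ (1 : Matrix n n ℂ)
  map_one' := Matrix.one_kronecker_one
  map_mul' A B := by rw [← Matrix.mul_kronecker_mul, one_mul]
  map_zero' := Matrix.zero_kronecker _
  map_add' A B := Matrix.add_kronecker _ _ _
  commutes' c := by
    simp only [Algebra.algebraMap_eq_smul_one]
    rw [Matrix.smul_kronecker, Matrix.one_kronecker_one]

/-- `B ↦ 1 ⊗ₖ B` as an algebra homomorphism. -/
def kronR (m n : Type*) [Fintype m] [DecidableEq m] [Fintype n] [DecidableEq n] :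
    Matrix n n ℂ →ₐ[ℂ] Matrix (m × n) (m × n) ℂ where
  toFun B := (1 : Matrix m m ℂ) ⊗ₖ B
  map_one' := Matrix.one_kronecker_one
  map_mul' A B := by rw [← Matrix.mul_kronecker_mul, one_mul]
  map_zero' := Matrix.kronecker_zero _
  map_add' A B := Matrix.kronecker_add _ _ _
  commutes' c := by
    simp only [Algebra.algebraMap_eq_smul_one]
    rw [Matrix.kronecker_smul, Matrix.one_kronecker_one]

lemma exp_kron_left (A : Matrix m m ℂ) :
    NormedSpace.exp (A ⊗ₖ (1 : Matrix n n ℂ))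
      = NormedSpace.exp A ⊗ₖ (1 : Matrix n n ℂ) := by
  letI : SeminormedRing (Matrix m m ℂ) := Matrix.linftyOpSemiNormedRing
  letI : NormedRing (Matrix m m ℂ) := Matrix.linftyOpNormedRing
  letI : NormedAlgebra ℂ (Matrix m m ℂ) := Matrix.linftyOpNormedAlgebra
  letI : NormedAlgebra ℚ (Matrix m m ℂ) := .restrictScalars ℚ ℂ _
  letI : SeminormedRing (Matrix (m × n) (m × n) ℂ) := Matrix.linftyOpSemiNormedRing
  letI : NormedRing (Matrix (m × n) (m × n) ℂ) := Matrix.linftyOpNormedRing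
  letI : NormedAlgebra ℂ (Matrix (m × n) (m × n) ℂ) := Matrix.linftyOpNormedAlgebra
  have hcont : Continuous (kronL m n) :=
    LinearMap.continuous_of_finiteDimensional (kronL m n).toLinearMap
  exact (NormedSpace.map_exp (kronL m n).toRingHom hcont A).symm

lemma exp_kron_right (B : Matrix n n ℂ) :
    NormedSpace.exp ((1 : Matrix m m ℂ) ⊗ₖ B)
      = (1 : Matrix m m ℂ) ⊗ₖ NormedSpace.exp B := by
  letI : SeminormedRing (Matrix n n ℂ) := Matrix.linftyOpSemiNormedRing
  letI : NormedRing (Matrix n n ℂ) := Matrix.linftyOpNormedRing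
  letI : NormedAlgebra ℂ (Matrix n n ℂ) := Matrix.linftyOpNormedAlgebra
  letI : NormedAlgebra ℚ (Matrix n n ℂ) := .restrictScalars ℚ ℂ _
  letI : SeminormedRing (Matrix (m × n) (m × n) ℂ) := Matrix.linftyOpSemiNormedRing
  letI : NormedRing (Matrix (m × n) (m × n) ℂ) := Matrix.linftyOpNormedRing
  letI : NormedAlgebra ℂ (Matrix (m × n) (m × n) ℂ) := Matrix.linftyOpNormedAlgebra
  have hcont : Continuous (kronR m n) :=
    LinearMap.continuous_of_finiteDimensional (kronR m n).toLinearMap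
  exact (NormedSpace.map_exp (kronR m n).toRingHom hcont B).symm

lemma kron_conjTranspose (A : Matrix m m ℂ) (B : Matrix n n ℂ) :
    (A ⊗ₖ B)ᴴ = Aᴴ ⊗ₖ Bᴴ := by
  ext i j
  simp [Matrix.conjTranspose_apply, Matrix.kroneckerMap_apply, star_mul']

end KronAux

open ClausiusAux in
/-- Clausius statement for initially uncorrelated Gibbs states: with the
heat-transfer condition `[H_I, H_A + H_B] = 0`, `β_A ≥ β_B` (A colder than B) and initial
state `ρ = ρ_A^{Gibbs} ⊗ ρ_B^{Gibbs}`, the heat transfer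
`Q = tr[(e^{-iHt} ρ e^{iHt} - ρ)H_B]` satisfies `(β_B - β_A)·Q ≥ 0` for every `t`:
heat does not flow from the cold system into the hot one. -/
theorem clausius_statement_product_gibbs
    {m n : Type*} [Fintype m] [DecidableEq m] [Fintype n] [DecidableEq n]
    (HA : Matrix m m ℂ) (HB : Matrix n n ℂ) (HI : Matrix (m × n) (m × n) ℂ)
    (hHA : HA.IsHermitian) (hHB : HB.IsHermitian) (hHI : HI.IsHermitian)
    (hcomm : ⁅HI, HA ⊗ₖ (1 : Matrix n n ℂ) + (1 : Matrix m m ℂ) ⊗ₖ HB⁆ = 0)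
    (H : Matrix (m × n) (m × n) ℂ)
    (hH : H = HA ⊗ₖ (1 : Matrix n n ℂ) + (1 : Matrix m m ℂ) ⊗ₖ HB + HI)
    (βA βB : ℝ) (hβ : βB ≤ βA)
    (ρ : Matrix (m × n) (m × n) ℂ) (hρ : ρ = gibbs βA HA ⊗ₖ gibbs βB HB) :
    ∀ t : ℝ,
      0 ≤ (βB - βA) * (((evolve H ρ t - ρ) * ((1 : Matrix m m ℂ) ⊗ₖ HB)).trace).re := by
  intro t
  rcases isEmpty_or_nonempty (m × n) with hE | hNE
  · simp [Matrix.trace, Finset.univ_eq_empty]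
  -- abbreviations
  set SA : Matrix (m × n) (m × n) ℂ := HA ⊗ₖ (1 : Matrix n n ℂ) with hSAdef
  set SB : Matrix (m × n) (m × n) ℂ := (1 : Matrix m m ℂ) ⊗ₖ HB with hSBdef
  set K : Matrix (m × n) (m × n) ℂ := (βA : ℂ) • SA + (βB : ℂ) • SB with hKdef
  -- Hermitian facts
  have hSA : SA.IsHermitian := by
    rw [Matrix.IsHermitian, hSAdef, kron_conjTranspose, hHA.eq, Matrix.conjTranspose_one]
  have hSB : SB.IsHermitian := by
    rw [Matrix.IsHermitian, hSBdef, kron_conjTranspose, hHB.eq, Matrix.conjTranspose_one]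
  have hKherm : K.IsHermitian := by
    rw [Matrix.IsHermitian, hKdef, Matrix.conjTranspose_add, Matrix.conjTranspose_smul,
      Matrix.conjTranspose_smul, hSA.eq, hSB.eq, Complex.star_def, Complex.conj_ofReal,
      Complex.conj_ofReal]
  have hM : (-K).IsHermitian := hKherm.neg
  have hHherm : H.IsHermitian := by
    rw [hH]; exact (hSA.add hSB).add hHI
  -- ρ as a normalized exponential
  have hexpM : NormedSpace.exp (-K)
      = NormedSpace.exp ((-βA : ℂ) • HA) ⊗ₖ NormedSpace.exp ((-βB : ℂ) • HB) := by
    have h1 : -K = ((-βA : ℂ) • HA) ⊗ₖ (1 : Matrix n n ℂ)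
        + (1 : Matrix m m ℂ) ⊗ₖ ((-βB : ℂ) • HB) := by
      rw [hKdef, Matrix.smul_kronecker, Matrix.kronecker_smul, hSAdef, hSBdef]
      push_cast
      module
    have hcomm2 : Commute (((-βA : ℂ) • HA) ⊗ₖ (1 : Matrix n n ℂ))
        ((1 : Matrix m m ℂ) ⊗ₖ ((-βB : ℂ) • HB)) := by
      unfold Commute SemiconjBy
      rw [← Matrix.mul_kronecker_mul, ← Matrix.mul_kronecker_mul, one_mul, mul_one,
        one_mul, mul_one]
    rw [h1, Matrix.exp_add_of_commute _ _ hcomm2, exp_kron_left, exp_kron_right,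
      ← Matrix.mul_kronecker_mul, one_mul, mul_one]
  have hρM : ρ = (NormedSpace.exp (-K)).trace⁻¹ • NormedSpace.exp (-K) := by
    rw [hρ, gibbs, gibbs, Matrix.smul_kronecker, Matrix.kronecker_smul, smul_smul, hexpM,
      Matrix.trace_kronecker, mul_inv]
  -- spectral decomposition of -K
  set W : Matrix (m × n) (m × n) ℂ := (hM.eigenvectorUnitary : Matrix (m × n) (m × n) ℂ)
    with hWdef
  have hW : W ∈ Matrix.unitaryGroup (m × n) ℂ := SetLike.coe_mem _
  set μ : (m × n) → ℝ := hM.eigenvalues with hμdef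
  have hMspec : -K = W * Matrix.diagonal (fun i => (μ i : ℂ)) * Wᴴ := hM.spectral_theorem
  have hexpMspec : NormedSpace.exp (-K)
      = W * Matrix.diagonal (fun i => (Real.exp (μ i) : ℂ)) * Wᴴ := by
    rw [hMspec, exp_uconj hW, Matrix.exp_diagonal]
    have hfun : NormedSpace.exp (fun i : m × n => ((μ i : ℝ) : ℂ))
        = fun i => (Real.exp (μ i) : ℂ) := by
      funext i
      rw [Pi.exp_def, ← Complex.exp_eq_exp_ℂ]
      simp [Complex.ofReal_exp]
    rw [hfun]
  set Z : ℝ := ∑ i, Real.exp (μ i) with hZdef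
  have hZpos : 0 < Z := Finset.sum_pos (fun i _ => Real.exp_pos _) Finset.univ_nonempty
  have hZtr : (NormedSpace.exp (-K)).trace = (Z : ℂ) := by
    rw [hexpMspec, trace_uconj hW, Matrix.trace_diagonal, hZdef]
    push_cast
    rfl
  set d : (m × n) → ℝ := fun i => Z⁻¹ * Real.exp (μ i) with hddef
  have hd0 : ∀ i, 0 < d i := fun i => by
    rw [hddef]; exact mul_pos (inv_pos.mpr hZpos) (Real.exp_pos _)
  have hdsum : ∑ i, d i = 1 := by
    rw [hddef, ← Finset.mul_sum, ← hZdef, inv_mul_cancel₀ (ne_of_gt hZpos)]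
  have hρspec : ρ = W * Matrix.diagonal (fun i => (d i : ℂ)) * Wᴴ := by
    rw [hρM, hZtr, hexpMspec]
    have hsm : ((Z : ℂ))⁻¹ • Matrix.diagonal (fun i => (Real.exp (μ i) : ℂ))
        = Matrix.diagonal (fun i => (d i : ℂ)) := by
      ext i j
      by_cases hij : i = j
      · subst hij
        simp only [Matrix.smul_apply, Matrix.diagonal_apply_eq, smul_eq_mul, hddef]
        push_cast
        ring
      · simp [Matrix.diagonal_apply_ne _ hij]
    rw [← hsm, mul_smul_comm, smul_mul_assoc]
  -- the evolution unitary
  set E : Matrix (m × n) (m × n) ℂ := NormedSpace.exp ((-(I * (t : ℂ))) • H) with hEdef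
  have hconjsm : ((-(I * (t : ℂ))) • H)ᴴ = (I * (t : ℂ)) • H := by
    rw [Matrix.conjTranspose_smul, hHherm.eq]
    congr 1
    simp [Complex.star_def]
  have hEH : NormedSpace.exp ((I * (t : ℂ)) • H) = Eᴴ := by
    rw [hEdef, ← Matrix.exp_conjTranspose, hconjsm]
  have hcomsm : Commute ((I * (t : ℂ)) • H) ((-(I * (t : ℂ))) • H) :=
    ((Commute.refl H).smul_left _).smul_right _
  have hFE : NormedSpace.exp ((I * (t : ℂ)) • H) * E = 1 := by
    rw [hEdef, ← Matrix.exp_add_of_commute _ _ hcomsm]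
    rw [show (I * (t : ℂ)) • H + (-(I * (t : ℂ))) • H = 0 by module]
    exact NormedSpace.exp_zero
  have hEunit : E ∈ Matrix.unitaryGroup (m × n) ℂ := by
    rw [Matrix.mem_unitaryGroup_iff, Matrix.star_eq_conjTranspose, ← hEH]
    rw [hEdef, ← Matrix.exp_add_of_commute _ _ hcomsm.symm]
    rw [show (-(I * (t : ℂ))) • H + (I * (t : ℂ)) • H = 0 by module]
    exact NormedSpace.exp_zero
  have hρ'form : evolve H ρ t = E * ρ * Eᴴ := by
    rw [evolve, hEH, hEdef]
  set V : Matrix (m × n) (m × n) ℂ := E * W with hVdef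
  have hV : V ∈ Matrix.unitaryGroup (m × n) ℂ := mul_mem hEunit hW
  have hρ'spec : evolve H ρ t = V * Matrix.diagonal (fun i => (d i : ℂ)) * Vᴴ := by
    rw [hρ'form, hρspec, hVdef, Matrix.conjTranspose_mul]
    noncomm_ring
  set T : Matrix (m × n) (m × n) ℂ := Wᴴ * V with hTdef
  have hT : T ∈ Matrix.unitaryGroup (m × n) ℂ := by
    rw [hTdef, ← Matrix.star_eq_conjTranspose]
    exact mul_mem (Unitary.star_mem hW) hV
  -- trace normalizations
  have hsumcast : ∑ i, ((d i : ℝ) : ℂ) = ((∑ i, d i : ℝ) : ℂ) := by push_cast; rfl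
  have htrρ'1 : (evolve H ρ t).trace = 1 := by
    rw [hρ'spec, trace_uconj hV, Matrix.trace_diagonal, hsumcast, hdsum, Complex.ofReal_one]
  have htrρ1 : ρ.trace = 1 := by
    rw [hρspec, trace_uconj hW, Matrix.trace_diagonal, hsumcast, hdsum, Complex.ofReal_one]
  -- entropy-type traces
  have hselftr' : ((evolve H ρ t) * mlog (evolve H ρ t)).trace
      = ((∑ i, d i * Real.log (d i) : ℝ) : ℂ) := by
    rw [hρ'spec]; exact trace_mlog_self hV d
  have hselftrρ : (ρ * mlog ρ).trace = ((∑ i, d i * Real.log (d i) : ℝ) : ℂ) := by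
    rw [hρspec]; exact trace_mlog_self hW d
  have hmlogρform : mlog ρ = W * Matrix.diagonal (fun i => (Real.log (d i) : ℂ)) * Wᴴ := by
    rw [hρspec]; exact mlog_uconj hW d
  have hcross : ((evolve H ρ t) * mlog ρ).trace
      = ((∑ i, ∑ j, Complex.normSq (T j i) * (d i * Real.log (d j)) : ℝ) : ℂ) := by
    rw [hρ'spec, hmlogρform, hTdef]
    exact trace_cross V W d (fun j => Real.log (d j))
  -- Klein's inequality
  have hklein : ∑ i, ∑ j, Complex.normSq (T j i) * (d i * Real.log (d j))
      ≤ ∑ i, d i * Real.log (d i) :=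
    klein_real (c := fun i j => Complex.normSq (T j i)) (fun i => (hd0 i).le) hd0
      (fun i j => Complex.normSq_nonneg _) (fun i => normSq_col_sum hT i)
      (fun j => normSq_row_sum hT j) hdsum hdsum
  -- affine form of `mlog ρ`
  have hWW : W * Wᴴ = 1 := by
    simpa [Matrix.star_eq_conjTranspose] using Matrix.mem_unitaryGroup_iff.mp hW
  have hlogd : ∀ i, Real.log (d i) = Real.log Z⁻¹ + μ i := by
    intro i
    show Real.log (Z⁻¹ * Real.exp (μ i)) = _
    rw [Real.log_mul (inv_ne_zero (ne_of_gt hZpos)) (Real.exp_ne_zero _), Real.log_exp]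
  have hmlogρ : mlog ρ = ((Real.log Z⁻¹ : ℝ) : ℂ) • (1 : Matrix (m × n) (m × n) ℂ) + -K := by
    rw [hmlogρform]
    have h1 : (fun i => ((Real.log (d i) : ℝ) : ℂ))
        = fun i => ((Real.log Z⁻¹ : ℝ) : ℂ) + ((μ i : ℝ) : ℂ) := by
      funext i; rw [hlogd i]; push_cast; ring
    have h2 : Matrix.diagonal (fun i => ((Real.log Z⁻¹ : ℝ) : ℂ) + ((μ i : ℝ) : ℂ))
        = ((Real.log Z⁻¹ : ℝ) : ℂ) • (1 : Matrix (m × n) (m × n) ℂ)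
          + Matrix.diagonal (fun i => ((μ i : ℝ) : ℂ)) := by
      rw [Matrix.smul_one_eq_diagonal, ← Matrix.diagonal_add]
    rw [h1, h2, mul_add, add_mul, ← hMspec]
    congr 1
    rw [mul_smul_comm, mul_one, smul_mul_assoc, hWW]
  have hgen : ∀ σ : Matrix (m × n) (m × n) ℂ, σ.trace = 1 →
      (σ * mlog ρ).trace = ((Real.log Z⁻¹ : ℝ) : ℂ) - (σ * K).trace := by
    intro σ hσ
    rw [hmlogρ, mul_add, Matrix.trace_add, mul_smul_comm, mul_one, Matrix.trace_smul, hσ,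
      smul_eq_mul, mul_one, mul_neg, Matrix.trace_neg, sub_eq_add_neg]
  -- energy conservation
  have hHS : Commute H (SA + SB) := by
    rw [hH]
    exact Commute.add_left (Commute.refl (SA + SB)) (commute_iff_lie_eq.mpr hcomm)
  have hcomE : Commute (NormedSpace.exp ((I * (t : ℂ)) • H)) (SA + SB) :=
    (hHS.smul_left _).exp_left
  have hcons : ((evolve H ρ t) * (SA + SB)).trace = (ρ * (SA + SB)).trace := by
    rw [hρ'form, ← hEH]
    rw [show E * ρ * NormedSpace.exp ((I * (t : ℂ)) • H) * (SA + SB)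
        = E * (ρ * (NormedSpace.exp ((I * (t : ℂ)) • H) * (SA + SB))) from by noncomm_ring]
    rw [Matrix.trace_mul_comm, hcomE.eq]
    rw [show ρ * ((SA + SB) * NormedSpace.exp ((I * (t : ℂ)) • H)) * E
        = ρ * (SA + SB) * (NormedSpace.exp ((I * (t : ℂ)) • H) * E) from by noncomm_ring]
    rw [hFE, mul_one]
  -- final bookkeeping
  set b : ℂ := ((evolve H ρ t - ρ) * SB).trace with hbdef
  set a : ℂ := ((evolve H ρ t - ρ) * SA).trace with hadef
  have hab : a + b = 0 := by
    have h1 : a + b = ((evolve H ρ t - ρ) * (SA + SB)).trace := by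
      rw [hadef, hbdef, mul_add, Matrix.trace_add]
    rw [h1, sub_mul, Matrix.trace_sub, hcons, sub_self]
  have ha : a = -b := by
    have := hab; linear_combination this
  have hKtr : ((evolve H ρ t) * K).trace - (ρ * K).trace = ((βB : ℂ) - (βA : ℂ)) * b := by
    have h1 : ((evolve H ρ t) * K).trace - (ρ * K).trace
        = ((evolve H ρ t - ρ) * K).trace := by
      rw [sub_mul, Matrix.trace_sub]
    rw [h1, hKdef, mul_add, Matrix.trace_add, mul_smul_comm, mul_smul_comm,
      Matrix.trace_smul, Matrix.trace_smul, smul_eq_mul, smul_eq_mul, ← hadef, ← hbdef, ha]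
    ring
  have hrelent : ((evolve H ρ t) * mlog (evolve H ρ t)).trace
      - ((evolve H ρ t) * mlog ρ).trace = ((βB : ℂ) - (βA : ℂ)) * b := by
    have h2 : ((evolve H ρ t) * mlog (evolve H ρ t)).trace = (ρ * mlog ρ).trace := by
      rw [hselftr', hselftrρ]
    rw [hgen _ htrρ'1, h2, hgen _ htrρ1, ← hKtr]
    ring
  have hre : 0 ≤ (((βB : ℂ) - (βA : ℂ)) * b).re := by
    rw [← hrelent, hselftr', hcross, ← Complex.ofReal_sub, Complex.ofReal_re]
    exact sub_nonneg.mpr hklein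
  have hcast : ((βB : ℂ) - (βA : ℂ)) = ((βB - βA : ℝ) : ℂ) := by push_cast; ring
  rw [hcast, Complex.re_ofReal_mul] at hre
  exact hre
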